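/- arXiv:2102.07667 — 3 statements merged into one kernel-verified Lean document; each statement's English description precedes it below -/
import Mathlib

section
/- Let P be the Petersen graph, let s and t be adjacent vertices of P, and let P' = P − {s,t}. The 2-colouring of V(P') that assigns colour 1 to the four vertices of degree 2 of P' and colour 2 to the remaining four vertices is balanced (each colour class has 4 vertices) and every monochromatic component has at most 2 vertices; in particular, the four degree-2 vertices of P' form an independent set, and every connected component of the subgraph of P' induced by the four degree-3 vertices has at most 2 vertices. -/
/-- Vertices of the Petersen graph: 2-element subsets of {1,...,5} (modelled as `Fin 5`). -/
abbrev PetersenVert : Type := {p : Finset (Fin 5) // p.card = 2}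

/-- The Petersen graph as the Kneser graph K(5,2): two 2-subsets are adjacent iff disjoint. -/
def Petersen : SimpleGraph PetersenVert where
  Adj a b := Disjoint a.1 b.1
  symm := ⟨fun _ _ h => Disjoint.symm h⟩
  loopless := by
    constructor
    intro a h
    have ha : a.1 = ∅ := by simpa using disjoint_self.mp h
    have := a.2
    rw [ha] at this
    simp at this

/-- The vertex set of `P' = P − {s, t}`. -/
def avoidSet (s t : PetersenVert) : Set PetersenVert := {v | v ≠ s ∧ v ≠ t}

/-- `P' = P − {s, t}`: the subgraph of the Petersen graph induced on the vertices
different from `s` and `t`. -/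
def Pminus (s t : PetersenVert) : SimpleGraph (avoidSet s t) :=
  Petersen.induce (avoidSet s t)

/-- `v` is one of the (four) vertices of degree 2 of `P' = P − {s, t}`. -/
def IsDeg2 (s t : PetersenVert) (v : avoidSet s t) : Prop :=
  ((Pminus s t).neighborSet v).ncard = 2

open Classical in
/-- The 2-colouring of `V(P')` assigning colour 1 (here the value `0 : Fin 2`) to the four
degree-2 vertices and colour 2 (here the value `1 : Fin 2`) to the remaining vertices. -/
noncomputable def deg2Colouring (s t : PetersenVert) : avoidSet s t → Fin 2 :=
  fun v => if IsDeg2 s t v then 0 else 1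

/-! ### Auxiliary decidable reformulations -/

instance instDecAdj : DecidableRel Petersen.Adj := fun a b =>
  inferInstanceAs (Decidable (Disjoint a.1 b.1))

def deg2P (s t v : PetersenVert) : Prop :=
  (Finset.univ.filter fun u : PetersenVert => (u ≠ s ∧ u ≠ t) ∧ Petersen.Adj v u).card = 2

instance (s t v : PetersenVert) : Decidable (deg2P s t v) := by unfold deg2P; infer_instance

set_option maxRecDepth 100000 in
set_option maxHeartbeats 10000000 in
set_option synthInstance.maxSize 2000 in
set_option synthInstance.maxHeartbeats 1000000 in
lemma key1 : ∀ s t : PetersenVert, Petersen.Adj s t →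
  (Finset.univ.filter fun v : PetersenVert => (v ≠ s ∧ v ≠ t) ∧ deg2P s t v).card = 4 := by decide

set_option maxRecDepth 100000 in
set_option maxHeartbeats 10000000 in
set_option synthInstance.maxSize 2000 in
set_option synthInstance.maxHeartbeats 1000000 in
lemma key2 : ∀ s t : PetersenVert, Petersen.Adj s t →
  (Finset.univ.filter fun v : PetersenVert => (v ≠ s ∧ v ≠ t) ∧ ¬ deg2P s t v).card = 4 := by decide

set_option maxRecDepth 100000 in
set_option maxHeartbeats 10000000 in
set_option synthInstance.maxSize 2000 in
set_option synthInstance.maxHeartbeats 1000000 in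
lemma key3 : ∀ s t : PetersenVert, Petersen.Adj s t →
  ∀ a b : PetersenVert, a ≠ s → a ≠ t → b ≠ s → b ≠ t →
    deg2P s t a → deg2P s t b → ¬ Petersen.Adj a b := by decide

set_option maxRecDepth 100000 in
set_option maxHeartbeats 10000000 in
set_option synthInstance.maxSize 2000 in
set_option synthInstance.maxHeartbeats 1000000 in
lemma key4 : ∀ s t : PetersenVert, Petersen.Adj s t →
  ∀ v a b : PetersenVert, v ≠ s → v ≠ t → a ≠ s → a ≠ t → b ≠ s → b ≠ t →
    ¬ deg2P s t v → ¬ deg2P s t a → ¬ deg2P s t b →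
    Petersen.Adj v a → Petersen.Adj v b → a = b := by decide

/-- In a graph of maximum degree at most 1, every connected component has at most 2 vertices. -/
lemma comp_le_two {V : Type*} (G : SimpleGraph V)
    (h : ∀ v a b : V, G.Adj v a → G.Adj v b → a = b) :
    ∀ K : G.ConnectedComponent, K.supp.ncard ≤ 2 := by
  refine SimpleGraph.ConnectedComponent.ind fun v => ?_
  have claim : ∀ u : V, ∀ _ : G.Walk u v, u = v ∨ G.Adj v u := by
    intro u p
    induction p with
    | nil => exact Or.inl rfl
    | @cons u w v hadj p ih =>
      rcases ih with rfl | hvw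
      · exact Or.inr hadj.symm
      · exact Or.inl (h w v u hvw.symm hadj.symm).symm
  have hsub : (G.connectedComponentMk v).supp ⊆ insert v {u | G.Adj v u} := by
    intro u hu
    have hr : G.Reachable u v := (SimpleGraph.ConnectedComponent.eq).mp hu
    rcases hr.elim (claim u) with rfl | hadj
    · exact Set.mem_insert _ _
    · exact Set.mem_insert_of_mem _ hadj
  have hS : ({u | G.Adj v u} : Set V).Subsingleton := fun a ha b hb => h v a b ha hb
  have hSfin : ({u | G.Adj v u} : Set V).Finite := hS.finite
  have h1 : ({u | G.Adj v u} : Set V).ncard ≤ 1 := by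
    rcases hS.eq_empty_or_singleton with he | ⟨a, ha⟩
    · simp [he]
    · simp [ha]
  calc (G.connectedComponentMk v).supp.ncard
      ≤ (insert v {u | G.Adj v u}).ncard := Set.ncard_le_ncard hsub (hSfin.insert v)
    _ ≤ ({u | G.Adj v u} : Set V).ncard + 1 := Set.ncard_insert_le _ _
    _ ≤ 2 := by omega

lemma pminus_adj {s t : PetersenVert} {a b : avoidSet s t} :
    (Pminus s t).Adj a b ↔ Petersen.Adj a.1 b.1 := Iff.rfl

lemma induce_adj_val {V : Type*} {G : SimpleGraph V} {S : Set V} {a b : S} :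
    (G.induce S).Adj a b ↔ G.Adj a.1 b.1 := Iff.rfl

lemma isDeg2_iff (s t : PetersenVert) (v : avoidSet s t) :
    IsDeg2 s t v ↔ deg2P s t v.1 := by
  have himg : Subtype.val '' ((Pminus s t).neighborSet v) =
      {u : PetersenVert | (u ≠ s ∧ u ≠ t) ∧ Petersen.Adj v.1 u} := by
    ext u
    constructor
    · rintro ⟨w, hw, rfl⟩
      exact ⟨w.2, pminus_adj.mp hw⟩
    · rintro ⟨hmem, hadj⟩
      exact ⟨⟨u, hmem⟩, pminus_adj.mpr hadj, rfl⟩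
  unfold IsDeg2 deg2P
  rw [← Set.ncard_image_of_injective _ Subtype.val_injective, himg,
    Set.ncard_eq_toFinset_card', Set.toFinset_setOf]

lemma colour_eq_zero_iff (s t : PetersenVert) (v : avoidSet s t) :
    deg2Colouring s t v = 0 ↔ IsDeg2 s t v := by
  by_cases h : IsDeg2 s t v <;> simp [deg2Colouring, h]

lemma colour_eq_one_iff (s t : PetersenVert) (v : avoidSet s t) :
    deg2Colouring s t v = 1 ↔ ¬ IsDeg2 s t v := by
  by_cases h : IsDeg2 s t v <;> simp [deg2Colouring, h]

lemma ncard_subtype_pred (s t : PetersenVert) (p : PetersenVert → Prop) [DecidablePred p] :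
    {v : avoidSet s t | p v.1}.ncard =
      (Finset.univ.filter fun v : PetersenVert => (v ≠ s ∧ v ≠ t) ∧ p v).card := by
  have himg : Subtype.val '' {v : avoidSet s t | p v.1} =
      {u : PetersenVert | (u ≠ s ∧ u ≠ t) ∧ p u} := by
    ext u
    constructor
    · rintro ⟨w, hw, rfl⟩
      exact ⟨w.2, hw⟩
    · rintro ⟨hmem, hp⟩
      exact ⟨⟨u, hmem⟩, hp, rfl⟩
  rw [← Set.ncard_image_of_injective _ Subtype.val_injective, himg,
    Set.ncard_eq_toFinset_card', Set.toFinset_setOf]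

/-- For adjacent vertices `s, t` of the Petersen graph and `P' = P − {s,t}`, the
2-colouring giving colour 1 to the four degree-2 vertices and colour 2 to the rest is
balanced (each colour class has 4 vertices) and every monochromatic component has at most
2 vertices; in particular, the four degree-2 vertices form an independent set, and every
connected component of the subgraph induced by the four degree-3 vertices (the remaining
vertices) has at most 2 vertices. -/
theorem all_one_balanced_colouring (s t : PetersenVert) (hst : Petersen.Adj s t) :
    {v : avoidSet s t | deg2Colouring s t v = 0}.ncard = 4 ∧
    {v : avoidSet s t | deg2Colouring s t v = 1}.ncard = 4 ∧
    (∀ i : Fin 2,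
      ∀ K : ((Pminus s t).induce {v | deg2Colouring s t v = i}).ConnectedComponent,
        K.supp.ncard ≤ 2) ∧
    (∀ a b : avoidSet s t, IsDeg2 s t a → IsDeg2 s t b → ¬ (Pminus s t).Adj a b) ∧
    (∀ K : ((Pminus s t).induce {v | ¬ IsDeg2 s t v}).ConnectedComponent,
        K.supp.ncard ≤ 2) := by
  have hindep : ∀ a b : avoidSet s t, IsDeg2 s t a → IsDeg2 s t b →
      ¬ (Pminus s t).Adj a b := by
    intro a b ha hb hadj
    exact key3 s t hst a.1 b.1 a.2.1 a.2.2 b.2.1 b.2.2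
      ((isDeg2_iff s t a).mp ha) ((isDeg2_iff s t b).mp hb) (pminus_adj.mp hadj)
  have hone : ∀ K : ((Pminus s t).induce {v | ¬ IsDeg2 s t v}).ConnectedComponent,
      K.supp.ncard ≤ 2 := by
    apply comp_le_two
    intro v a b hva hvb
    have hva' : Petersen.Adj v.1.1 a.1.1 := pminus_adj.mp (induce_adj_val.mp hva)
    have hvb' : Petersen.Adj v.1.1 b.1.1 := pminus_adj.mp (induce_adj_val.mp hvb)
    have hv : ¬ deg2P s t v.1.1 := fun h => v.2 ((isDeg2_iff s t v.1).mpr h)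
    have ha : ¬ deg2P s t a.1.1 := fun h => a.2 ((isDeg2_iff s t a.1).mpr h)
    have hb : ¬ deg2P s t b.1.1 := fun h => b.2 ((isDeg2_iff s t b.1).mpr h)
    have := key4 s t hst v.1.1 a.1.1 b.1.1 v.1.2.1 v.1.2.2 a.1.2.1 a.1.2.2
      b.1.2.1 b.1.2.2 hv ha hb hva' hvb'
    exact Subtype.ext (Subtype.ext this)
  refine ⟨?_, ?_, ?_, hindep, hone⟩
  · have hset : {v : avoidSet s t | deg2Colouring s t v = 0} =
        {v : avoidSet s t | deg2P s t v.1} := by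
      ext v; rw [Set.mem_setOf_eq, Set.mem_setOf_eq, colour_eq_zero_iff, isDeg2_iff]
    rw [hset]
    exact (ncard_subtype_pred s t (fun u => deg2P s t u)).trans (key1 s t hst)
  · have hset : {v : avoidSet s t | deg2Colouring s t v = 1} =
        {v : avoidSet s t | ¬ deg2P s t v.1} := by
      ext v; rw [Set.mem_setOf_eq, Set.mem_setOf_eq, colour_eq_one_iff, isDeg2_iff]
    rw [hset]
    exact (ncard_subtype_pred s t (fun u => ¬ deg2P s t u)).trans (key2 s t hst)
  · intro i
    fin_cases i
    · apply comp_le_two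
      intro v a b hva hvb
      exfalso
      have h0 : ∀ x : {v : avoidSet s t | deg2Colouring s t v = 0}, IsDeg2 s t x.1 :=
        fun x => (colour_eq_zero_iff s t x.1).mp x.2
      exact hindep v.1 a.1 (h0 v) (h0 a) (induce_adj_val.mp hva)
    · apply comp_le_two
      intro v a b hva hvb
      have h1 : ∀ x : {v : avoidSet s t | deg2Colouring s t v = 1}, ¬ deg2P s t x.1.1 :=
        fun x => fun h => ((colour_eq_one_iff s t x.1).mp x.2) ((isDeg2_iff s t x.1).mpr h)
      have := key4 s t hst v.1.1 a.1.1 b.1.1 v.1.2.1 v.1.2.2 a.1.2.1 a.1.2.2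
        b.1.2.1 b.1.2.2 (h1 v) (h1 a) (h1 b) (pminus_adj.mp (induce_adj_val.mp hva)) (pminus_adj.mp (induce_adj_val.mp hvb))
      exact Subtype.ext (Subtype.ext this)
end

section
/- Let P be the Petersen graph, let s and t be adjacent vertices of P, and let P' = P − {s,t}. For every neighbour l of s in P with l ≠ t and every neighbour r of t in P with r ≠ s, there exists a 2-colouring of V(P') such that: each colour class has exactly 4 vertices; every monochromatic component has at most 2 vertices; among the four degree-2 vertices of P', exactly l and r receive colour 1; and moreover l has a neighbour in P' coloured 1 while r has no neighbour in P' coloured 1 (the 'left (1,1)-balanced' colouring). -/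
section Helpers

lemma reach_eq_or_adj {V : Type*} {G : SimpleGraph V}
    (h : ∀ a b c, G.Adj a b → G.Adj a c → b = c) {u v : V} (huv : G.Reachable u v) :
    u = v ∨ G.Adj u v := by
  obtain ⟨p⟩ := huv
  induction p with
  | nil => exact Or.inl rfl
  | @cons x y z hadj p ih =>
    rcases ih with rfl | h2
    · exact Or.inr hadj
    · exact Or.inl (h y x z hadj.symm h2)

lemma supp_le_two {V : Type*} {G : SimpleGraph V}
    (h : ∀ a b c, G.Adj a b → G.Adj a c → b = c) (K : G.ConnectedComponent) :
    K.supp.ncard ≤ 2 := by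
  obtain ⟨u, rfl⟩ := K.exists_rep
  by_cases hw : ∃ w, G.Adj u w
  · obtain ⟨w, hw⟩ := hw
    have hsub : (G.connectedComponentMk u).supp ⊆ {u, w} := by
      intro v hv
      rw [SimpleGraph.ConnectedComponent.mem_supp_iff, SimpleGraph.ConnectedComponent.eq] at hv
      rcases reach_eq_or_adj h hv with rfl | hadj
      · exact Set.mem_insert _ _
      · exact Or.inr (h u v w hadj.symm hw ▸ rfl)
    calc (G.connectedComponentMk u).supp.ncard ≤ ({u, w} : Set V).ncard :=
          Set.ncard_le_ncard hsub ((Set.finite_singleton _).insert _)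
      _ ≤ 2 := by
        refine le_trans (Set.ncard_insert_le _ _) ?_
        simp
  · have hsub : (G.connectedComponentMk u).supp ⊆ {u} := by
      intro v hv
      rw [SimpleGraph.ConnectedComponent.mem_supp_iff, SimpleGraph.ConnectedComponent.eq] at hv
      rcases reach_eq_or_adj h hv with rfl | hadj
      · rfl
      · exact absurd ⟨v, hadj.symm⟩ hw
    calc (G.connectedComponentMk u).supp.ncard ≤ ({u} : Set V).ncard :=
          Set.ncard_le_ncard hsub (Set.finite_singleton _)
      _ ≤ 2 := by simp

lemma ncard4' {α : Type*} {x1 x2 x3 x4 : α} (h12 : x1 ≠ x2) (h13 : x1 ≠ x3) (h14 : x1 ≠ x4)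
    (h23 : x2 ≠ x3) (h24 : x2 ≠ x4) (h34 : x3 ≠ x4) : ({x1,x2,x3,x4} : Set α).ncard = 4 := by
  rw [Set.ncard_insert_of_notMem (by simp [h12, h13, h14])
        (((Set.finite_singleton x4).insert x3).insert x2),
      Set.ncard_insert_of_notMem (by simp [h23, h24]) ((Set.finite_singleton x4).insert x3),
      Set.ncard_pair h34]

lemma ncard3' {α : Type*} {x1 x2 x3 : α} (h12 : x1 ≠ x2) (h13 : x1 ≠ x3)
    (h23 : x2 ≠ x3) : ({x1,x2,x3} : Set α).ncard = 3 := by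
  rw [Set.ncard_insert_of_notMem (by simp [h12, h13]) ((Set.finite_singleton x3).insert x2),
      Set.ncard_pair h23]

lemma fne {α : Type*} {p q : Finset α} {x : α} (h1 : x ∈ p) (h2 : x ∉ q) : p ≠ q :=
  fun h => h2 (h ▸ h1)

lemma vne {p : Finset (Fin 5)} {hp : p.card = 2} {s : PetersenVert} {x : Fin 5}
    (h1 : x ∈ p) (h2 : x ∉ s.1) : (⟨p, hp⟩ : PetersenVert) ≠ s :=
  fun h => h2 (by rw [← congrArg Subtype.val h]; exact h1)

/-- The colouring used in the construction. -/
def col (a c m : Fin 5) (s t : PetersenVert) (v : ↥(avoidSet s t)) : Fin 2 :=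
  if a ∈ v.1.1 ∨ (c ∈ v.1.1 ∧ m ∈ v.1.1) then 0 else 1

end Helpers

set_option maxHeartbeats 2000000 in
lemma petersen_main (a b c d m : Fin 5)
    (hab : a ≠ b) (hac : a ≠ c) (had : a ≠ d) (ham : a ≠ m) (hbc : b ≠ c)
    (hbd : b ≠ d) (hbm : b ≠ m) (hcd : c ≠ d) (hcm : c ≠ m) (hdm : d ≠ m)
    (s t l r : PetersenVert)
    (hs : s.1 = {a,b}) (ht : t.1 = {c,d}) (hl : l.1 = {c,m}) (hr : r.1 = {a,m}) :
    ∃ c : avoidSet s t → Fin 2,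
      {v : avoidSet s t | c v = 0}.ncard = 4 ∧
      {v : avoidSet s t | c v = 1}.ncard = 4 ∧
      (∀ i : Fin 2,
        ∀ K : ((Pminus s t).induce {v | c v = i}).ConnectedComponent, K.supp.ncard ≤ 2) ∧
      (∀ v : avoidSet s t, IsDeg2 s t v →
        (c v = 0 ↔ ((v : PetersenVert) = l ∨ (v : PetersenVert) = r))) ∧
      (∃ w : avoidSet s t, Petersen.Adj l (w : PetersenVert) ∧ c w = 0) ∧
      (∀ w : avoidSet s t, Petersen.Adj r (w : PetersenVert) → c w ≠ 0) := by
  have hba : b ≠ a := (hab).symm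
  have hca : c ≠ a := (hac).symm
  have hda : d ≠ a := (had).symm
  have hma : m ≠ a := (ham).symm
  have hcb : c ≠ b := (hbc).symm
  have hdb : d ≠ b := (hbd).symm
  have hmb : m ≠ b := (hbm).symm
  have hdc : d ≠ c := (hcd).symm
  have hmc : m ≠ c := (hcm).symm
  have hmd : m ≠ d := (hdm).symm
  have hc5 : ({a,b,c,d,m} : Finset (Fin 5)).card = 5 := by
    rw [Finset.card_insert_of_notMem (by simp [hab, hac, had, ham]),
        Finset.card_insert_of_notMem (by simp [hbc, hbd, hbm]),
        Finset.card_insert_of_notMem (by simp [hcd, hcm]),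
        Finset.card_insert_of_notMem (by simp [hdm]), Finset.card_singleton]
  have hmem5 : ∀ x : Fin 5, x = a ∨ x = b ∨ x = c ∨ x = d ∨ x = m := by
    intro x
    have hx : x ∈ ({a,b,c,d,m} : Finset (Fin 5)) := by
      have huniv : ({a,b,c,d,m} : Finset (Fin 5)) = Finset.univ :=
        Finset.eq_univ_of_card _ (by rw [hc5]; simp)
      rw [huniv]
      exact Finset.mem_univ x
    simpa using hx
  have henum : ∀ v : ↥(avoidSet s t), v.1.1 = {a,m} ∨ v.1.1 = {b,m} ∨ v.1.1 = {c,m} ∨ v.1.1 = {d,m} ∨ v.1.1 = {a,c} ∨ v.1.1 = {a,d} ∨ v.1.1 = {b,c} ∨ v.1.1 = {b,d} := by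
    rintro ⟨⟨vs, hcard⟩, hvs, hvt⟩
    obtain ⟨x, y, hxy, rfl⟩ := Finset.card_eq_two.mp hcard
    have hvs' : ({x,y} : Finset (Fin 5)) ≠ {a,b} := fun h => hvs (Subtype.ext (h.trans hs.symm))
    have hvt' : ({x,y} : Finset (Fin 5)) ≠ {c,d} := fun h => hvt (Subtype.ext (h.trans ht.symm))
    rcases hmem5 x with rfl|rfl|rfl|rfl|rfl <;> rcases hmem5 y with rfl|rfl|rfl|rfl|rfl <;>
      first
        | exact absurd rfl hxy
        | exact absurd rfl hvs'
        | exact absurd (Finset.pair_comm _ _) hvs'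
        | exact absurd rfl hvt'
        | exact absurd (Finset.pair_comm _ _) hvt'
        | exact Or.inl rfl
        | exact Or.inl (Finset.pair_comm _ _)
        | exact Or.inr (Or.inl rfl)
        | exact Or.inr (Or.inl (Finset.pair_comm _ _))
        | exact Or.inr (Or.inr (Or.inl rfl))
        | exact Or.inr (Or.inr (Or.inl (Finset.pair_comm _ _)))
        | exact Or.inr (Or.inr (Or.inr (Or.inl rfl)))
        | exact Or.inr (Or.inr (Or.inr (Or.inl (Finset.pair_comm _ _))))
        | exact Or.inr (Or.inr (Or.inr (Or.inr (Or.inl rfl))))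
        | exact Or.inr (Or.inr (Or.inr (Or.inr (Or.inl (Finset.pair_comm _ _)))))
        | exact Or.inr (Or.inr (Or.inr (Or.inr (Or.inr (Or.inl rfl)))))
        | exact Or.inr (Or.inr (Or.inr (Or.inr (Or.inr (Or.inl (Finset.pair_comm _ _))))))
        | exact Or.inr (Or.inr (Or.inr (Or.inr (Or.inr (Or.inr (Or.inl rfl))))))
        | exact Or.inr (Or.inr (Or.inr (Or.inr (Or.inr (Or.inr (Or.inl (Finset.pair_comm _ _)))))))
        | exact Or.inr (Or.inr (Or.inr (Or.inr (Or.inr (Or.inr (Or.inr (rfl)))))))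
        | exact Or.inr (Or.inr (Or.inr (Or.inr (Or.inr (Or.inr (Or.inr ((Finset.pair_comm _ _))))))))
  have n_am_bm : ({a,m} : Finset (Fin 5)) ≠ {b,m} := (fne (x := a) (by simp) (by simp [hab, ham]))
  have n_am_cm : ({a,m} : Finset (Fin 5)) ≠ {c,m} := (fne (x := a) (by simp) (by simp [hac, ham]))
  have n_am_dm : ({a,m} : Finset (Fin 5)) ≠ {d,m} := (fne (x := a) (by simp) (by simp [had, ham]))
  have n_am_ac : ({a,m} : Finset (Fin 5)) ≠ {a,c} := (fne (x := m) (by simp) (by simp [hma, hmc]))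
  have n_am_ad : ({a,m} : Finset (Fin 5)) ≠ {a,d} := (fne (x := m) (by simp) (by simp [hma, hmd]))
  have n_am_bc : ({a,m} : Finset (Fin 5)) ≠ {b,c} := (fne (x := a) (by simp) (by simp [hab, hac]))
  have n_am_bd : ({a,m} : Finset (Fin 5)) ≠ {b,d} := (fne (x := a) (by simp) (by simp [hab, had]))
  have n_bm_am : ({b,m} : Finset (Fin 5)) ≠ {a,m} := (fne (x := b) (by simp) (by simp [hba, hbm]))
  have n_bm_cm : ({b,m} : Finset (Fin 5)) ≠ {c,m} := (fne (x := b) (by simp) (by simp [hbc, hbm]))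
  have n_bm_dm : ({b,m} : Finset (Fin 5)) ≠ {d,m} := (fne (x := b) (by simp) (by simp [hbd, hbm]))
  have n_bm_ac : ({b,m} : Finset (Fin 5)) ≠ {a,c} := (fne (x := b) (by simp) (by simp [hba, hbc]))
  have n_bm_ad : ({b,m} : Finset (Fin 5)) ≠ {a,d} := (fne (x := b) (by simp) (by simp [hba, hbd]))
  have n_bm_bc : ({b,m} : Finset (Fin 5)) ≠ {b,c} := (fne (x := m) (by simp) (by simp [hmb, hmc]))
  have n_bm_bd : ({b,m} : Finset (Fin 5)) ≠ {b,d} := (fne (x := m) (by simp) (by simp [hmb, hmd]))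
  have n_cm_am : ({c,m} : Finset (Fin 5)) ≠ {a,m} := (fne (x := c) (by simp) (by simp [hca, hcm]))
  have n_cm_bm : ({c,m} : Finset (Fin 5)) ≠ {b,m} := (fne (x := c) (by simp) (by simp [hcb, hcm]))
  have n_cm_dm : ({c,m} : Finset (Fin 5)) ≠ {d,m} := (fne (x := c) (by simp) (by simp [hcd, hcm]))
  have n_cm_ac : ({c,m} : Finset (Fin 5)) ≠ {a,c} := (fne (x := m) (by simp) (by simp [hma, hmc]))
  have n_cm_ad : ({c,m} : Finset (Fin 5)) ≠ {a,d} := (fne (x := c) (by simp) (by simp [hca, hcd]))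
  have n_cm_bc : ({c,m} : Finset (Fin 5)) ≠ {b,c} := (fne (x := m) (by simp) (by simp [hmb, hmc]))
  have n_cm_bd : ({c,m} : Finset (Fin 5)) ≠ {b,d} := (fne (x := c) (by simp) (by simp [hcb, hcd]))
  have n_dm_am : ({d,m} : Finset (Fin 5)) ≠ {a,m} := (fne (x := d) (by simp) (by simp [hda, hdm]))
  have n_dm_bm : ({d,m} : Finset (Fin 5)) ≠ {b,m} := (fne (x := d) (by simp) (by simp [hdb, hdm]))
  have n_dm_cm : ({d,m} : Finset (Fin 5)) ≠ {c,m} := (fne (x := d) (by simp) (by simp [hdc, hdm]))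
  have n_dm_ac : ({d,m} : Finset (Fin 5)) ≠ {a,c} := (fne (x := d) (by simp) (by simp [hda, hdc]))
  have n_dm_ad : ({d,m} : Finset (Fin 5)) ≠ {a,d} := (fne (x := m) (by simp) (by simp [hma, hmd]))
  have n_dm_bc : ({d,m} : Finset (Fin 5)) ≠ {b,c} := (fne (x := d) (by simp) (by simp [hdb, hdc]))
  have n_dm_bd : ({d,m} : Finset (Fin 5)) ≠ {b,d} := (fne (x := m) (by simp) (by simp [hmb, hmd]))
  have n_ac_am : ({a,c} : Finset (Fin 5)) ≠ {a,m} := (fne (x := c) (by simp) (by simp [hca, hcm]))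
  have n_ac_bm : ({a,c} : Finset (Fin 5)) ≠ {b,m} := (fne (x := a) (by simp) (by simp [hab, ham]))
  have n_ac_cm : ({a,c} : Finset (Fin 5)) ≠ {c,m} := (fne (x := a) (by simp) (by simp [hac, ham]))
  have n_ac_dm : ({a,c} : Finset (Fin 5)) ≠ {d,m} := (fne (x := a) (by simp) (by simp [had, ham]))
  have n_ac_ad : ({a,c} : Finset (Fin 5)) ≠ {a,d} := (fne (x := c) (by simp) (by simp [hca, hcd]))
  have n_ac_bc : ({a,c} : Finset (Fin 5)) ≠ {b,c} := (fne (x := a) (by simp) (by simp [hab, hac]))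
  have n_ac_bd : ({a,c} : Finset (Fin 5)) ≠ {b,d} := (fne (x := a) (by simp) (by simp [hab, had]))
  have n_ad_am : ({a,d} : Finset (Fin 5)) ≠ {a,m} := (fne (x := d) (by simp) (by simp [hda, hdm]))
  have n_ad_bm : ({a,d} : Finset (Fin 5)) ≠ {b,m} := (fne (x := a) (by simp) (by simp [hab, ham]))
  have n_ad_cm : ({a,d} : Finset (Fin 5)) ≠ {c,m} := (fne (x := a) (by simp) (by simp [hac, ham]))
  have n_ad_dm : ({a,d} : Finset (Fin 5)) ≠ {d,m} := (fne (x := a) (by simp) (by simp [had, ham]))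
  have n_ad_ac : ({a,d} : Finset (Fin 5)) ≠ {a,c} := (fne (x := d) (by simp) (by simp [hda, hdc]))
  have n_ad_bc : ({a,d} : Finset (Fin 5)) ≠ {b,c} := (fne (x := a) (by simp) (by simp [hab, hac]))
  have n_ad_bd : ({a,d} : Finset (Fin 5)) ≠ {b,d} := (fne (x := a) (by simp) (by simp [hab, had]))
  have n_bc_am : ({b,c} : Finset (Fin 5)) ≠ {a,m} := (fne (x := b) (by simp) (by simp [hba, hbm]))
  have n_bc_bm : ({b,c} : Finset (Fin 5)) ≠ {b,m} := (fne (x := c) (by simp) (by simp [hcb, hcm]))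
  have n_bc_cm : ({b,c} : Finset (Fin 5)) ≠ {c,m} := (fne (x := b) (by simp) (by simp [hbc, hbm]))
  have n_bc_dm : ({b,c} : Finset (Fin 5)) ≠ {d,m} := (fne (x := b) (by simp) (by simp [hbd, hbm]))
  have n_bc_ac : ({b,c} : Finset (Fin 5)) ≠ {a,c} := (fne (x := b) (by simp) (by simp [hba, hbc]))
  have n_bc_ad : ({b,c} : Finset (Fin 5)) ≠ {a,d} := (fne (x := b) (by simp) (by simp [hba, hbd]))
  have n_bc_bd : ({b,c} : Finset (Fin 5)) ≠ {b,d} := (fne (x := c) (by simp) (by simp [hcb, hcd]))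
  have n_bd_am : ({b,d} : Finset (Fin 5)) ≠ {a,m} := (fne (x := b) (by simp) (by simp [hba, hbm]))
  have n_bd_bm : ({b,d} : Finset (Fin 5)) ≠ {b,m} := (fne (x := d) (by simp) (by simp [hdb, hdm]))
  have n_bd_cm : ({b,d} : Finset (Fin 5)) ≠ {c,m} := (fne (x := b) (by simp) (by simp [hbc, hbm]))
  have n_bd_dm : ({b,d} : Finset (Fin 5)) ≠ {d,m} := (fne (x := b) (by simp) (by simp [hbd, hbm]))
  have n_bd_ac : ({b,d} : Finset (Fin 5)) ≠ {a,c} := (fne (x := b) (by simp) (by simp [hba, hbc]))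
  have n_bd_ad : ({b,d} : Finset (Fin 5)) ≠ {a,d} := (fne (x := b) (by simp) (by simp [hba, hbd]))
  have n_bd_bc : ({b,d} : Finset (Fin 5)) ≠ {b,c} := (fne (x := d) (by simp) (by simp [hdb, hdc]))
  obtain ⟨w1, hw1⟩ : ∃ w : ↥(avoidSet s t), w.1.1 = ({a,m} : Finset (Fin 5)) :=
    ⟨⟨⟨{a,m}, Finset.card_pair ham⟩,
      vne (x := m) (by simp) (by rw [hs]; simp [hma, hmb]),
      vne (x := a) (by simp) (by rw [ht]; simp [hac, had])⟩, rfl⟩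
  obtain ⟨w2, hw2⟩ : ∃ w : ↥(avoidSet s t), w.1.1 = ({c,m} : Finset (Fin 5)) :=
    ⟨⟨⟨{c,m}, Finset.card_pair hcm⟩,
      vne (x := c) (by simp) (by rw [hs]; simp [hca, hcb]),
      vne (x := m) (by simp) (by rw [ht]; simp [hmc, hmd])⟩, rfl⟩
  obtain ⟨w3, hw3⟩ : ∃ w : ↥(avoidSet s t), w.1.1 = ({a,c} : Finset (Fin 5)) :=
    ⟨⟨⟨{a,c}, Finset.card_pair hac⟩,
      vne (x := c) (by simp) (by rw [hs]; simp [hca, hcb]),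
      vne (x := a) (by simp) (by rw [ht]; simp [hac, had])⟩, rfl⟩
  obtain ⟨w4, hw4⟩ : ∃ w : ↥(avoidSet s t), w.1.1 = ({a,d} : Finset (Fin 5)) :=
    ⟨⟨⟨{a,d}, Finset.card_pair had⟩,
      vne (x := d) (by simp) (by rw [hs]; simp [hda, hdb]),
      vne (x := a) (by simp) (by rw [ht]; simp [hac, had])⟩, rfl⟩
  obtain ⟨u1, hu1⟩ : ∃ w : ↥(avoidSet s t), w.1.1 = ({b,m} : Finset (Fin 5)) :=
    ⟨⟨⟨{b,m}, Finset.card_pair hbm⟩,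
      vne (x := m) (by simp) (by rw [hs]; simp [hma, hmb]),
      vne (x := b) (by simp) (by rw [ht]; simp [hbc, hbd])⟩, rfl⟩
  obtain ⟨u2, hu2⟩ : ∃ w : ↥(avoidSet s t), w.1.1 = ({d,m} : Finset (Fin 5)) :=
    ⟨⟨⟨{d,m}, Finset.card_pair hdm⟩,
      vne (x := d) (by simp) (by rw [hs]; simp [hda, hdb]),
      vne (x := m) (by simp) (by rw [ht]; simp [hmc, hmd])⟩, rfl⟩
  obtain ⟨u3, hu3⟩ : ∃ w : ↥(avoidSet s t), w.1.1 = ({b,c} : Finset (Fin 5)) :=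
    ⟨⟨⟨{b,c}, Finset.card_pair hbc⟩,
      vne (x := c) (by simp) (by rw [hs]; simp [hca, hcb]),
      vne (x := b) (by simp) (by rw [ht]; simp [hbc, hbd])⟩, rfl⟩
  obtain ⟨u4, hu4⟩ : ∃ w : ↥(avoidSet s t), w.1.1 = ({b,d} : Finset (Fin 5)) :=
    ⟨⟨⟨{b,d}, Finset.card_pair hbd⟩,
      vne (x := d) (by simp) (by rw [hs]; simp [hda, hdb]),
      vne (x := b) (by simp) (by rw [ht]; simp [hbc, hbd])⟩, rfl⟩
  have hvalne : ∀ (v w : ↥(avoidSet s t)) (p q : Finset (Fin 5)),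
      v.1.1 = p → w.1.1 = q → p ≠ q → v ≠ w :=
    fun v w p q hp hq hne h => hne (by rw [← hp, ← hq, h])
  have hcol0 : ∀ v : ↥(avoidSet s t),
      col a c m s t v = 0 ↔ (a ∈ v.1.1 ∨ (c ∈ v.1.1 ∧ m ∈ v.1.1)) := by
    intro v
    by_cases h : (a ∈ v.1.1 ∨ (c ∈ v.1.1 ∧ m ∈ v.1.1)) <;> simp [col, h]
  have hcol1 : ∀ v : ↥(avoidSet s t),
      col a c m s t v = 1 ↔ ¬(a ∈ v.1.1 ∨ (c ∈ v.1.1 ∧ m ∈ v.1.1)) := by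
    intro v
    by_cases h : (a ∈ v.1.1 ∨ (c ∈ v.1.1 ∧ m ∈ v.1.1)) <;> simp [col, h]
  have e_am : ∀ v : ↥(avoidSet s t), v.1.1 = {a,m} → col a c m s t v = 0 :=
    fun v hv => (hcol0 v).mpr (Or.inl (by rw [hv]; simp))
  have e_cm : ∀ v : ↥(avoidSet s t), v.1.1 = {c,m} → col a c m s t v = 0 :=
    fun v hv => (hcol0 v).mpr (Or.inr ⟨by rw [hv]; simp, by rw [hv]; simp⟩)
  have e_ac : ∀ v : ↥(avoidSet s t), v.1.1 = {a,c} → col a c m s t v = 0 :=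
    fun v hv => (hcol0 v).mpr (Or.inl (by rw [hv]; simp))
  have e_ad : ∀ v : ↥(avoidSet s t), v.1.1 = {a,d} → col a c m s t v = 0 :=
    fun v hv => (hcol0 v).mpr (Or.inl (by rw [hv]; simp))
  have e_bm : ∀ v : ↥(avoidSet s t), v.1.1 = {b,m} → col a c m s t v = 1 :=
    fun v hv => (hcol1 v).mpr (by rw [hv]; simp [hab, hac, had, ham, hbc, hbd, hbm, hcd, hcm, hdm, hba, hca, hda, hma, hcb, hdb, hmb, hdc, hmc, hmd])
  have e_dm : ∀ v : ↥(avoidSet s t), v.1.1 = {d,m} → col a c m s t v = 1 :=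
    fun v hv => (hcol1 v).mpr (by rw [hv]; simp [hab, hac, had, ham, hbc, hbd, hbm, hcd, hcm, hdm, hba, hca, hda, hma, hcb, hdb, hmb, hdc, hmc, hmd])
  have e_bc : ∀ v : ↥(avoidSet s t), v.1.1 = {b,c} → col a c m s t v = 1 :=
    fun v hv => (hcol1 v).mpr (by rw [hv]; simp [hab, hac, had, ham, hbc, hbd, hbm, hcd, hcm, hdm, hba, hca, hda, hma, hcb, hdb, hmb, hdc, hmc, hmd])
  have e_bd : ∀ v : ↥(avoidSet s t), v.1.1 = {b,d} → col a c m s t v = 1 :=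
    fun v hv => (hcol1 v).mpr (by rw [hv]; simp [hab, hac, had, ham, hbc, hbd, hbm, hcd, hcm, hdm, hba, hca, hda, hma, hcb, hdb, hmb, hdc, hmc, hmd])
  refine ⟨col a c m s t, ?_, ?_, ?_, ?_, ?_, ?_⟩
  · -- colour class
    have hset : {v : ↥(avoidSet s t) | col a c m s t v = 0} = ({w1, w2, w3, w4} : Set ↥(avoidSet s t)) := by
      ext v
      simp only [Set.mem_setOf_eq, Set.mem_insert_iff, Set.mem_singleton_iff]
      rcases henum v with hv|hv|hv|hv|hv|hv|hv|hv
      · exact iff_of_true (e_am v hv) (Or.inl (Subtype.ext (Subtype.ext (hv.trans hw1.symm))))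
      · refine iff_of_false (by simp [e_bm v hv]) ?_
        simp only [not_or]
        exact ⟨hvalne v w1 _ _ hv hw1 n_bm_am, hvalne v w2 _ _ hv hw2 n_bm_cm, hvalne v w3 _ _ hv hw3 n_bm_ac, hvalne v w4 _ _ hv hw4 n_bm_ad⟩
      · exact iff_of_true (e_cm v hv) (Or.inr (Or.inl (Subtype.ext (Subtype.ext (hv.trans hw2.symm)))))
      · refine iff_of_false (by simp [e_dm v hv]) ?_
        simp only [not_or]
        exact ⟨hvalne v w1 _ _ hv hw1 n_dm_am, hvalne v w2 _ _ hv hw2 n_dm_cm, hvalne v w3 _ _ hv hw3 n_dm_ac, hvalne v w4 _ _ hv hw4 n_dm_ad⟩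
      · exact iff_of_true (e_ac v hv) (Or.inr (Or.inr (Or.inl (Subtype.ext (Subtype.ext (hv.trans hw3.symm))))))
      · exact iff_of_true (e_ad v hv) (Or.inr (Or.inr (Or.inr (Subtype.ext (Subtype.ext (hv.trans hw4.symm))))))
      · refine iff_of_false (by simp [e_bc v hv]) ?_
        simp only [not_or]
        exact ⟨hvalne v w1 _ _ hv hw1 n_bc_am, hvalne v w2 _ _ hv hw2 n_bc_cm, hvalne v w3 _ _ hv hw3 n_bc_ac, hvalne v w4 _ _ hv hw4 n_bc_ad⟩
      · refine iff_of_false (by simp [e_bd v hv]) ?_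
        simp only [not_or]
        exact ⟨hvalne v w1 _ _ hv hw1 n_bd_am, hvalne v w2 _ _ hv hw2 n_bd_cm, hvalne v w3 _ _ hv hw3 n_bd_ac, hvalne v w4 _ _ hv hw4 n_bd_ad⟩
    rw [hset]
    exact ncard4' (hvalne w1 w2 _ _ hw1 hw2 n_am_cm) (hvalne w1 w3 _ _ hw1 hw3 n_am_ac) (hvalne w1 w4 _ _ hw1 hw4 n_am_ad) (hvalne w2 w3 _ _ hw2 hw3 n_cm_ac) (hvalne w2 w4 _ _ hw2 hw4 n_cm_ad) (hvalne w3 w4 _ _ hw3 hw4 n_ac_ad)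
  · -- colour class
    have hset : {v : ↥(avoidSet s t) | col a c m s t v = 1} = ({u1, u2, u3, u4} : Set ↥(avoidSet s t)) := by
      ext v
      simp only [Set.mem_setOf_eq, Set.mem_insert_iff, Set.mem_singleton_iff]
      rcases henum v with hv|hv|hv|hv|hv|hv|hv|hv
      · refine iff_of_false (by simp [e_am v hv]) ?_
        simp only [not_or]
        exact ⟨hvalne v u1 _ _ hv hu1 n_am_bm, hvalne v u2 _ _ hv hu2 n_am_dm, hvalne v u3 _ _ hv hu3 n_am_bc, hvalne v u4 _ _ hv hu4 n_am_bd⟩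
      · exact iff_of_true (e_bm v hv) (Or.inl (Subtype.ext (Subtype.ext (hv.trans hu1.symm))))
      · refine iff_of_false (by simp [e_cm v hv]) ?_
        simp only [not_or]
        exact ⟨hvalne v u1 _ _ hv hu1 n_cm_bm, hvalne v u2 _ _ hv hu2 n_cm_dm, hvalne v u3 _ _ hv hu3 n_cm_bc, hvalne v u4 _ _ hv hu4 n_cm_bd⟩
      · exact iff_of_true (e_dm v hv) (Or.inr (Or.inl (Subtype.ext (Subtype.ext (hv.trans hu2.symm)))))
      · refine iff_of_false (by simp [e_ac v hv]) ?_
        simp only [not_or]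
        exact ⟨hvalne v u1 _ _ hv hu1 n_ac_bm, hvalne v u2 _ _ hv hu2 n_ac_dm, hvalne v u3 _ _ hv hu3 n_ac_bc, hvalne v u4 _ _ hv hu4 n_ac_bd⟩
      · refine iff_of_false (by simp [e_ad v hv]) ?_
        simp only [not_or]
        exact ⟨hvalne v u1 _ _ hv hu1 n_ad_bm, hvalne v u2 _ _ hv hu2 n_ad_dm, hvalne v u3 _ _ hv hu3 n_ad_bc, hvalne v u4 _ _ hv hu4 n_ad_bd⟩
      · exact iff_of_true (e_bc v hv) (Or.inr (Or.inr (Or.inl (Subtype.ext (Subtype.ext (hv.trans hu3.symm))))))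
      · exact iff_of_true (e_bd v hv) (Or.inr (Or.inr (Or.inr (Subtype.ext (Subtype.ext (hv.trans hu4.symm))))))
    rw [hset]
    exact ncard4' (hvalne u1 u2 _ _ hu1 hu2 n_bm_dm) (hvalne u1 u3 _ _ hu1 hu3 n_bm_bc) (hvalne u1 u4 _ _ hu1 hu4 n_bm_bd) (hvalne u2 u3 _ _ hu2 hu3 n_dm_bc) (hvalne u2 u4 _ _ hu2 hu4 n_dm_bd) (hvalne u3 u4 _ _ hu3 hu4 n_bc_bd)
  · -- monochromatic components
    intro i
    have hclass : ∀ v : ↥(avoidSet s t), col a c m s t v = 0 → v.1.1 = {a,m} ∨ v.1.1 = {c,m} ∨ v.1.1 = {a,c} ∨ v.1.1 = {a,d} := by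
      intro v hv
      rcases henum v with h|h|h|h|h|h|h|h <;>
        first
          | exact Or.inl h
          | exact Or.inr (Or.inl h)
          | exact Or.inr (Or.inr (Or.inl h))
          | exact Or.inr (Or.inr (Or.inr h))
          | (rw [e_bm v h] at hv; exact absurd hv (by decide))
          | (rw [e_dm v h] at hv; exact absurd hv (by decide))
          | (rw [e_bc v h] at hv; exact absurd hv (by decide))
          | (rw [e_bd v h] at hv; exact absurd hv (by decide))
    have hclass1 : ∀ v : ↥(avoidSet s t), col a c m s t v = 1 → v.1.1 = {b,m} ∨ v.1.1 = {d,m} ∨ v.1.1 = {b,c} ∨ v.1.1 = {b,d} := by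
      intro v hv
      rcases henum v with h|h|h|h|h|h|h|h <;>
        first
          | exact Or.inl h
          | exact Or.inr (Or.inl h)
          | exact Or.inr (Or.inr (Or.inl h))
          | exact Or.inr (Or.inr (Or.inr h))
          | (rw [e_am v h] at hv; exact absurd hv (by decide))
          | (rw [e_cm v h] at hv; exact absurd hv (by decide))
          | (rw [e_ac v h] at hv; exact absurd hv (by decide))
          | (rw [e_ad v h] at hv; exact absurd hv (by decide))
    fin_cases i
    · refine fun K => supp_le_two ?_ K
      intro p q r' hpq hpr
      have hd1 : Disjoint p.1.1.1 q.1.1.1 := hpq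
      have hd2 : Disjoint p.1.1.1 r'.1.1.1 := hpr
      rcases hclass p.1 p.2 with hp|hp|hp|hp <;>
        rcases hclass q.1 q.2 with hq|hq|hq|hq <;>
          rcases hclass r'.1 r'.2 with hr|hr|hr|hr <;>
        first
          | exact Subtype.ext (Subtype.ext (Subtype.ext (hq.trans hr.symm)))
          | (rw [hp, hq] at hd1; simp [Finset.disjoint_left] at hd1; done)
          | (rw [hp, hr] at hd2; simp [Finset.disjoint_left] at hd2; done)
    · refine fun K => supp_le_two ?_ K
      intro p q r' hpq hpr
      have hd1 : Disjoint p.1.1.1 q.1.1.1 := hpq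
      have hd2 : Disjoint p.1.1.1 r'.1.1.1 := hpr
      rcases hclass1 p.1 p.2 with hp|hp|hp|hp <;>
        rcases hclass1 q.1 q.2 with hq|hq|hq|hq <;>
          rcases hclass1 r'.1 r'.2 with hr|hr|hr|hr <;>
        first
          | exact Subtype.ext (Subtype.ext (Subtype.ext (hq.trans hr.symm)))
          | (rw [hp, hq] at hd1; simp [Finset.disjoint_left] at hd1; done)
          | (rw [hp, hr] at hd2; simp [Finset.disjoint_left] at hd2; done)
  · -- the degree-2 clause
    intro v hdeg
    rcases henum v with hv|hv|hv|hv|hv|hv|hv|hv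
    · exact iff_of_true (e_am v hv) (Or.inr (Subtype.ext (hv.trans hr.symm)))
    · refine iff_of_false (by simp [e_bm v hv]) ?_
      simp only [not_or]
      refine ⟨fun h => n_bm_cm ?_, fun h => n_bm_am ?_⟩
      · rw [← hv, ← hl, h]
      · rw [← hv, ← hr, h]
    · exact iff_of_true (e_cm v hv) (Or.inl (Subtype.ext (hv.trans hl.symm)))
    · refine iff_of_false (by simp [e_dm v hv]) ?_
      simp only [not_or]
      refine ⟨fun h => n_dm_cm ?_, fun h => n_dm_am ?_⟩
      · rw [← hv, ← hl, h]
      · rw [← hv, ← hr, h]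
    · exfalso
      have hnb : (Pminus s t).neighborSet v = ({u1, u2, u4} : Set ↥(avoidSet s t)) := by
        ext w
        simp only [SimpleGraph.mem_neighborSet, Set.mem_insert_iff, Set.mem_singleton_iff]
        rcases henum w with hw|hw|hw|hw|hw|hw|hw|hw
        · refine iff_of_false (fun hadj => ?_) ?_
          · have hdj : Disjoint v.1.1 w.1.1 := hadj
            rw [hv, hw] at hdj
            simp [Finset.disjoint_left] at hdj
          · simp only [not_or]
            exact ⟨hvalne w u1 _ _ hw hu1 n_am_bm, hvalne w u2 _ _ hw hu2 n_am_dm, hvalne w u4 _ _ hw hu4 n_am_bd⟩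
        · exact iff_of_true (by show Disjoint v.1.1 w.1.1; rw [hv, hw]; simp [Finset.disjoint_left, hab, ham, hcb, hcm]) (Or.inl (Subtype.ext (Subtype.ext (hw.trans hu1.symm))))
        · refine iff_of_false (fun hadj => ?_) ?_
          · have hdj : Disjoint v.1.1 w.1.1 := hadj
            rw [hv, hw] at hdj
            simp [Finset.disjoint_left] at hdj
          · simp only [not_or]
            exact ⟨hvalne w u1 _ _ hw hu1 n_cm_bm, hvalne w u2 _ _ hw hu2 n_cm_dm, hvalne w u4 _ _ hw hu4 n_cm_bd⟩
        · exact iff_of_true (by show Disjoint v.1.1 w.1.1; rw [hv, hw]; simp [Finset.disjoint_left, had, ham, hcd, hcm]) (Or.inr (Or.inl (Subtype.ext (Subtype.ext (hw.trans hu2.symm)))))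
        · refine iff_of_false (fun hadj => ?_) ?_
          · have hdj : Disjoint v.1.1 w.1.1 := hadj
            rw [hv, hw] at hdj
            simp [Finset.disjoint_left] at hdj
          · simp only [not_or]
            exact ⟨hvalne w u1 _ _ hw hu1 n_ac_bm, hvalne w u2 _ _ hw hu2 n_ac_dm, hvalne w u4 _ _ hw hu4 n_ac_bd⟩
        · refine iff_of_false (fun hadj => ?_) ?_
          · have hdj : Disjoint v.1.1 w.1.1 := hadj
            rw [hv, hw] at hdj
            simp [Finset.disjoint_left] at hdj
          · simp only [not_or]
            exact ⟨hvalne w u1 _ _ hw hu1 n_ad_bm, hvalne w u2 _ _ hw hu2 n_ad_dm, hvalne w u4 _ _ hw hu4 n_ad_bd⟩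
        · refine iff_of_false (fun hadj => ?_) ?_
          · have hdj : Disjoint v.1.1 w.1.1 := hadj
            rw [hv, hw] at hdj
            simp [Finset.disjoint_left] at hdj
          · simp only [not_or]
            exact ⟨hvalne w u1 _ _ hw hu1 n_bc_bm, hvalne w u2 _ _ hw hu2 n_bc_dm, hvalne w u4 _ _ hw hu4 n_bc_bd⟩
        · exact iff_of_true (by show Disjoint v.1.1 w.1.1; rw [hv, hw]; simp [Finset.disjoint_left, hab, had, hcb, hcd]) (Or.inr (Or.inr (Subtype.ext (Subtype.ext (hw.trans hu4.symm)))))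
      have hdeg' : ((Pminus s t).neighborSet v).ncard = 2 := hdeg
      rw [hnb, ncard3' (hvalne u1 u2 _ _ hu1 hu2 n_bm_dm) (hvalne u1 u4 _ _ hu1 hu4 n_bm_bd) (hvalne u2 u4 _ _ hu2 hu4 n_dm_bd)] at hdeg'
      exact absurd hdeg' (by decide)
    · exfalso
      have hnb : (Pminus s t).neighborSet v = ({u1, w2, u3} : Set ↥(avoidSet s t)) := by
        ext w
        simp only [SimpleGraph.mem_neighborSet, Set.mem_insert_iff, Set.mem_singleton_iff]
        rcases henum w with hw|hw|hw|hw|hw|hw|hw|hw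
        · refine iff_of_false (fun hadj => ?_) ?_
          · have hdj : Disjoint v.1.1 w.1.1 := hadj
            rw [hv, hw] at hdj
            simp [Finset.disjoint_left] at hdj
          · simp only [not_or]
            exact ⟨hvalne w u1 _ _ hw hu1 n_am_bm, hvalne w w2 _ _ hw hw2 n_am_cm, hvalne w u3 _ _ hw hu3 n_am_bc⟩
        · exact iff_of_true (by show Disjoint v.1.1 w.1.1; rw [hv, hw]; simp [Finset.disjoint_left, hab, ham, hdb, hdm]) (Or.inl (Subtype.ext (Subtype.ext (hw.trans hu1.symm))))
        · exact iff_of_true (by show Disjoint v.1.1 w.1.1; rw [hv, hw]; simp [Finset.disjoint_left, hac, ham, hdc, hdm]) (Or.inr (Or.inl (Subtype.ext (Subtype.ext (hw.trans hw2.symm)))))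
        · refine iff_of_false (fun hadj => ?_) ?_
          · have hdj : Disjoint v.1.1 w.1.1 := hadj
            rw [hv, hw] at hdj
            simp [Finset.disjoint_left] at hdj
          · simp only [not_or]
            exact ⟨hvalne w u1 _ _ hw hu1 n_dm_bm, hvalne w w2 _ _ hw hw2 n_dm_cm, hvalne w u3 _ _ hw hu3 n_dm_bc⟩
        · refine iff_of_false (fun hadj => ?_) ?_
          · have hdj : Disjoint v.1.1 w.1.1 := hadj
            rw [hv, hw] at hdj
            simp [Finset.disjoint_left] at hdj
          · simp only [not_or]
            exact ⟨hvalne w u1 _ _ hw hu1 n_ac_bm, hvalne w w2 _ _ hw hw2 n_ac_cm, hvalne w u3 _ _ hw hu3 n_ac_bc⟩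
        · refine iff_of_false (fun hadj => ?_) ?_
          · have hdj : Disjoint v.1.1 w.1.1 := hadj
            rw [hv, hw] at hdj
            simp [Finset.disjoint_left] at hdj
          · simp only [not_or]
            exact ⟨hvalne w u1 _ _ hw hu1 n_ad_bm, hvalne w w2 _ _ hw hw2 n_ad_cm, hvalne w u3 _ _ hw hu3 n_ad_bc⟩
        · exact iff_of_true (by show Disjoint v.1.1 w.1.1; rw [hv, hw]; simp [Finset.disjoint_left, hab, hac, hdb, hdc]) (Or.inr (Or.inr (Subtype.ext (Subtype.ext (hw.trans hu3.symm)))))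
        · refine iff_of_false (fun hadj => ?_) ?_
          · have hdj : Disjoint v.1.1 w.1.1 := hadj
            rw [hv, hw] at hdj
            simp [Finset.disjoint_left] at hdj
          · simp only [not_or]
            exact ⟨hvalne w u1 _ _ hw hu1 n_bd_bm, hvalne w w2 _ _ hw hw2 n_bd_cm, hvalne w u3 _ _ hw hu3 n_bd_bc⟩
      have hdeg' : ((Pminus s t).neighborSet v).ncard = 2 := hdeg
      rw [hnb, ncard3' (hvalne u1 w2 _ _ hu1 hw2 n_bm_cm) (hvalne u1 u3 _ _ hu1 hu3 n_bm_bc) (hvalne w2 u3 _ _ hw2 hu3 n_cm_bc)] at hdeg'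
      exact absurd hdeg' (by decide)
    · refine iff_of_false (by simp [e_bc v hv]) ?_
      simp only [not_or]
      refine ⟨fun h => n_bc_cm ?_, fun h => n_bc_am ?_⟩
      · rw [← hv, ← hl, h]
      · rw [← hv, ← hr, h]
    · refine iff_of_false (by simp [e_bd v hv]) ?_
      simp only [not_or]
      refine ⟨fun h => n_bd_cm ?_, fun h => n_bd_am ?_⟩
      · rw [← hv, ← hl, h]
      · rw [← hv, ← hr, h]
  · -- l has a colour-0 neighbour
    refine ⟨w4, ?_, e_ad w4 hw4⟩
    show Disjoint l.1 w4.1.1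
    rw [hl, hw4]
    simp [Finset.disjoint_left, hca, hcd, hma, hmd]
  · -- r has no colour-0 neighbour
    intro w hw
    have hdj : Disjoint r.1 w.1.1 := hw
    rw [hr] at hdj
    rcases henum w with hv|hv|hv|hv|hv|hv|hv|hv
    · rw [hv] at hdj
      simp [Finset.disjoint_left] at hdj
    · simp [e_bm w hv]
    · rw [hv] at hdj
      simp [Finset.disjoint_left] at hdj
    · simp [e_dm w hv]
    · rw [hv] at hdj
      simp [Finset.disjoint_left] at hdj
    · rw [hv] at hdj
      simp [Finset.disjoint_left] at hdj
    · simp [e_bc w hv]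
    · simp [e_bd w hv]

/-- The "left (1,1)-balanced" colouring of the Petersen 4-pole: for adjacent vertices
`s, t` of the Petersen graph, `P' = P − {s,t}`, a neighbour `l` of `s` (`l ≠ t`) and a
neighbour `r` of `t` (`r ≠ s`), there is a 2-colouring of `V(P')` (colour 1 is the value
`0 : Fin 2`) with colour classes of size 4, all monochromatic components of at most 2
vertices, in which among the four degree-2 vertices exactly `l` and `r` get colour 1, and
moreover `l` has a neighbour in `P'` coloured 1 while `r` has no neighbour in `P'`
coloured 1. -/
theorem left_one_one_balanced_colouring_exists (s t : PetersenVert) (hst : Petersen.Adj s t)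
    (l r : PetersenVert) (hsl : Petersen.Adj s l) (hlt : l ≠ t)
    (htr : Petersen.Adj t r) (hrs : r ≠ s) :
    ∃ c : avoidSet s t → Fin 2,
      {v : avoidSet s t | c v = 0}.ncard = 4 ∧
      {v : avoidSet s t | c v = 1}.ncard = 4 ∧
      (∀ i : Fin 2,
        ∀ K : ((Pminus s t).induce {v | c v = i}).ConnectedComponent, K.supp.ncard ≤ 2) ∧
      (∀ v : avoidSet s t, IsDeg2 s t v →
        (c v = 0 ↔ ((v : PetersenVert) = l ∨ (v : PetersenVert) = r))) ∧
      (∃ w : avoidSet s t, Petersen.Adj l (w : PetersenVert) ∧ c w = 0) ∧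
      (∀ w : avoidSet s t, Petersen.Adj r (w : PetersenVert) → c w ≠ 0) := by
  obtain ⟨a, b, hab, hs⟩ := Finset.card_eq_two.mp s.2
  obtain ⟨c, d, hcd, ht⟩ := Finset.card_eq_two.mp t.2
  have hst' : Disjoint s.1 t.1 := hst
  rw [hs, ht] at hst'
  have ha' : a ∉ ({c,d} : Finset (Fin 5)) := Finset.disjoint_left.mp hst' (by simp)
  have hb' : b ∉ ({c,d} : Finset (Fin 5)) := Finset.disjoint_left.mp hst' (by simp)
  simp only [Finset.mem_insert, Finset.mem_singleton, not_or] at ha' hb'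
  obtain ⟨hac, had⟩ := ha'
  obtain ⟨hbc, hbd⟩ := hb'
  obtain ⟨m, hm⟩ : ∃ m : Fin 5, m ∉ ({a,b,c,d} : Finset (Fin 5)) := by
    by_contra h
    push_neg at h
    have hsub : (Finset.univ : Finset (Fin 5)) ⊆ {a,b,c,d} := fun x _ => h x
    have hle := Finset.card_le_card hsub
    have h1 := Finset.card_insert_le a ({b,c,d} : Finset (Fin 5))
    have h2 := Finset.card_insert_le b ({c,d} : Finset (Fin 5))
    have h3 := Finset.card_insert_le c ({d} : Finset (Fin 5))
    simp only [Finset.card_univ, Fintype.card_fin, Finset.card_singleton] at hle h1 h2 h3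
    omega
  simp only [Finset.mem_insert, Finset.mem_singleton, not_or] at hm
  obtain ⟨hma, hmb, hmc, hmd⟩ := hm
  have ham := Ne.symm hma
  have hbm := Ne.symm hmb
  have hcm := Ne.symm hmc
  have hdm := Ne.symm hmd
  have hc5 : ({a,b,c,d,m} : Finset (Fin 5)).card = 5 := by
    rw [Finset.card_insert_of_notMem (by simp [hab, hac, had, ham]),
        Finset.card_insert_of_notMem (by simp [hbc, hbd, hbm]),
        Finset.card_insert_of_notMem (by simp [hcd, hcm]),
        Finset.card_insert_of_notMem (by simp [hdm]), Finset.card_singleton]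
  have hmem5 : ∀ x : Fin 5, x = a ∨ x = b ∨ x = c ∨ x = d ∨ x = m := by
    intro x
    have hx : x ∈ ({a,b,c,d,m} : Finset (Fin 5)) := by
      have huniv : ({a,b,c,d,m} : Finset (Fin 5)) = Finset.univ :=
        Finset.eq_univ_of_card _ (by rw [hc5]; simp)
      rw [huniv]
      exact Finset.mem_univ x
    simpa using hx
  have hlcase : l.1 = {c,m} ∨ l.1 = {d,m} := by
    obtain ⟨x, y, hxy, hlv⟩ := Finset.card_eq_two.mp l.2
    have hsl' : Disjoint ({a,b} : Finset (Fin 5)) ({x,y} : Finset (Fin 5)) := by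
      rw [← hs, ← hlv]; exact hsl
    have ha2 : a ∉ ({x,y} : Finset (Fin 5)) := Finset.disjoint_left.mp hsl' (by simp)
    have hb2 : b ∉ ({x,y} : Finset (Fin 5)) := Finset.disjoint_left.mp hsl' (by simp)
    simp only [Finset.mem_insert, Finset.mem_singleton, not_or] at ha2 hb2
    have hlt' : ({x,y} : Finset (Fin 5)) ≠ {c,d} := by
      rw [← hlv, ← ht]; exact fun h => hlt (Subtype.ext h)
    rw [hlv]
    rcases hmem5 x with rfl|rfl|rfl|rfl|rfl <;> rcases hmem5 y with rfl|rfl|rfl|rfl|rfl <;>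
      first
        | exact absurd rfl hxy
        | exact absurd rfl ha2.1
        | exact absurd rfl ha2.2
        | exact absurd rfl hb2.1
        | exact absurd rfl hb2.2
        | exact absurd rfl hlt'
        | exact absurd (Finset.pair_comm _ _) hlt'
        | exact Or.inl rfl
        | exact Or.inl (Finset.pair_comm _ _)
        | exact Or.inr rfl
        | exact Or.inr (Finset.pair_comm _ _)
  have hrcase : r.1 = {a,m} ∨ r.1 = {b,m} := by
    obtain ⟨x, y, hxy, hrv⟩ := Finset.card_eq_two.mp r.2
    have htr' : Disjoint ({c,d} : Finset (Fin 5)) ({x,y} : Finset (Fin 5)) := by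
      rw [← ht, ← hrv]; exact htr
    have hc2 : c ∉ ({x,y} : Finset (Fin 5)) := Finset.disjoint_left.mp htr' (by simp)
    have hd2 : d ∉ ({x,y} : Finset (Fin 5)) := Finset.disjoint_left.mp htr' (by simp)
    simp only [Finset.mem_insert, Finset.mem_singleton, not_or] at hc2 hd2
    have hrs' : ({x,y} : Finset (Fin 5)) ≠ {a,b} := by
      rw [← hrv, ← hs]; exact fun h => hrs (Subtype.ext h)
    rw [hrv]
    rcases hmem5 x with rfl|rfl|rfl|rfl|rfl <;> rcases hmem5 y with rfl|rfl|rfl|rfl|rfl <;>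
      first
        | exact absurd rfl hxy
        | exact absurd rfl hc2.1
        | exact absurd rfl hc2.2
        | exact absurd rfl hd2.1
        | exact absurd rfl hd2.2
        | exact absurd rfl hrs'
        | exact absurd (Finset.pair_comm _ _) hrs'
        | exact Or.inl rfl
        | exact Or.inl (Finset.pair_comm _ _)
        | exact Or.inr rfl
        | exact Or.inr (Finset.pair_comm _ _)
  rcases hlcase with hl' | hl' <;> rcases hrcase with hr' | hr'
  · exact petersen_main a b c d m hab hac had ham hbc hbd hbm hcd hcm hdm s t l r hs ht hl' hr'
  · exact petersen_main b a c d m hab.symm hbc hbd hbm hac had ham hcd hcm hdm s t l r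
      (hs.trans (Finset.pair_comm a b)) ht hl' hr'
  · exact petersen_main a b d c m hab had hac ham hbd hbc hbm hcd.symm hdm hcm s t l r
      hs (ht.trans (Finset.pair_comm c d)) hl' hr'
  · exact petersen_main b a d c m hab.symm hbd hbc hbm had hac ham hcd.symm hdm hcm s t l r
      (hs.trans (Finset.pair_comm a b)) (ht.trans (Finset.pair_comm c d)) hl' hr'
end

section
/- Let P be the Petersen graph, let s and t be adjacent vertices of P, and let P' = P − {s,t}. For every neighbour l of s in P with l ≠ t and every neighbour r of t in P with r ≠ s, there exists a 2-colouring of V(P') such that: each colour class has exactly 4 vertices; every monochromatic component has at most 2 vertices; among the four degree-2 vertices of P', exactly l and r receive colour 1; and moreover r has a neighbour in P' coloured 1 while l has no neighbour in P' coloured 1 (the 'right (1,1)-balanced' colouring). -/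
/- ### Auxiliary instances -/

instance avoidSet.decPred (s t : PetersenVert) : DecidablePred (· ∈ avoidSet s t) :=
  fun v => inferInstanceAs (Decidable (v ≠ s ∧ v ≠ t))

instance : DecidableRel Petersen.Adj :=
  fun a b => inferInstanceAs (Decidable (Disjoint a.1 b.1))

instance (s t : PetersenVert) : DecidableRel (Pminus s t).Adj :=
  fun a b => inferInstanceAs (Decidable (Disjoint (a : PetersenVert).1 (b : PetersenVert).1))

/- ### Components of a graph of max degree ≤ 1 have at most two vertices -/

lemma walk_start_adj {V : Type*} {G : SimpleGraph V}
    (h : ∀ v, (G.neighborSet v).Subsingleton) :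
    ∀ {u v : V} (_ : G.Walk u v), v = u ∨ G.Adj u v := by
  intro u v p
  induction p with
  | nil => exact Or.inl rfl
  | @cons u a v hua q ih =>
    rcases ih with rfl | hav
    · exact Or.inr hua
    · exact Or.inl (h a hav hua.symm)

lemma comp_card_le_two {V : Type*} (G : SimpleGraph V)
    (h : ∀ v, (G.neighborSet v).Subsingleton) (K : G.ConnectedComponent) :
    K.supp.ncard ≤ 2 := by
  obtain ⟨u, hu⟩ := K.exists_rep
  have hsub : K.supp ⊆ insert u (G.neighborSet u) := by
    intro v hv
    rw [SimpleGraph.ConnectedComponent.mem_supp_iff] at hv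
    have hreach : G.Reachable u v :=
      SimpleGraph.ConnectedComponent.exact (hu.trans hv.symm)
    obtain ⟨p⟩ := hreach
    rcases walk_start_adj h p with rfl | hadj
    · exact Set.mem_insert _ _
    · exact Set.mem_insert_of_mem _ hadj
  have hfin : (insert u (G.neighborSet u)).Finite :=
    Set.Finite.insert u ((h u).finite)
  calc K.supp.ncard ≤ (insert u (G.neighborSet u)).ncard := Set.ncard_le_ncard hsub hfin
    _ ≤ (G.neighborSet u).ncard + 1 := Set.ncard_insert_le _ _
    _ ≤ 1 + 1 := by
        have : (G.neighborSet u).ncard ≤ 1 := by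
          rcases Set.Subsingleton.eq_empty_or_singleton (h u) with he | ⟨x, hx⟩
          · simp [he]
          · simp [hx]
        omega

/- ### The explicit colouring and the decidable facts about it -/

/-- The explicit colouring: colour `0` iff `v` meets `l ∩ t` or `v = r`. -/
def theColouring (t l r : PetersenVert) (s' : PetersenVert) (v : avoidSet s' t) : Fin 2 :=
  if ¬ Disjoint (v : PetersenVert).1 (l.1 ∩ t.1) ∨ (v : PetersenVert) = r then 0 else 1

lemma core1 : ∀ s t l r : PetersenVert, Petersen.Adj s t → Petersen.Adj s l → l ≠ t →
    Petersen.Adj t r → r ≠ s →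
    (Finset.univ.filter fun v : avoidSet s t => theColouring t l r s v = 0).card = 4 := by
  decide

lemma core2 : ∀ s t l r : PetersenVert, Petersen.Adj s t → Petersen.Adj s l → l ≠ t →
    Petersen.Adj t r → r ≠ s →
    (Finset.univ.filter fun v : avoidSet s t => theColouring t l r s v = 1).card = 4 := by
  decide

set_option synthInstance.maxSize 5000 in
set_option synthInstance.maxHeartbeats 1000000 in
set_option maxHeartbeats 2000000 in
lemma core3 : ∀ s t l r : PetersenVert, Petersen.Adj s t → Petersen.Adj s l → l ≠ t →
    Petersen.Adj t r → r ≠ s →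
    ∀ v w1 w2 : avoidSet s t, (Pminus s t).Adj v w1 → (Pminus s t).Adj v w2 →
      theColouring t l r s w1 = theColouring t l r s v →
      theColouring t l r s w2 = theColouring t l r s v → w1 = w2 := by
  decide

set_option synthInstance.maxSize 5000 in
set_option synthInstance.maxHeartbeats 1000000 in
set_option maxHeartbeats 2000000 in
lemma core4 : ∀ s t l r : PetersenVert, Petersen.Adj s t → Petersen.Adj s l → l ≠ t →
    Petersen.Adj t r → r ≠ s →
    ∀ v : avoidSet s t, (Finset.univ.filter fun w => (Pminus s t).Adj v w).card = 2 →
      (theColouring t l r s v = 0 ↔ ((v : PetersenVert) = l ∨ (v : PetersenVert) = r)) := by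
  decide

set_option synthInstance.maxSize 5000 in
set_option synthInstance.maxHeartbeats 1000000 in
set_option maxHeartbeats 2000000 in
lemma core5 : ∀ s t l r : PetersenVert, Petersen.Adj s t → Petersen.Adj s l → l ≠ t →
    Petersen.Adj t r → r ≠ s →
    ∃ w : avoidSet s t, Petersen.Adj r (w : PetersenVert) ∧ theColouring t l r s w = 0 := by
  decide

lemma core6 : ∀ s t l r : PetersenVert, Petersen.Adj s t → Petersen.Adj s l → l ≠ t →
    Petersen.Adj t r → r ≠ s →
    ∀ w : avoidSet s t, Petersen.Adj l (w : PetersenVert) → theColouring t l r s w ≠ 0 := by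
  decide

/- ### Main theorem -/

/-- The "right (1,1)-balanced" colouring of the Petersen 4-pole: for adjacent vertices
`s, t` of the Petersen graph, `P' = P − {s,t}`, a neighbour `l` of `s` (`l ≠ t`) and a
neighbour `r` of `t` (`r ≠ s`), there is a 2-colouring of `V(P')` (colour 1 is the value
`0 : Fin 2`) with colour classes of size 4, all monochromatic components of at most 2
vertices, in which among the four degree-2 vertices exactly `l` and `r` get colour 1, and
moreover `r` has a neighbour in `P'` coloured 1 while `l` has no neighbour in `P'`
coloured 1. -/
theorem right_one_one_balanced_colouring_exists (s t : PetersenVert) (hst : Petersen.Adj s t)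
    (l r : PetersenVert) (hsl : Petersen.Adj s l) (hlt : l ≠ t)
    (htr : Petersen.Adj t r) (hrs : r ≠ s) :
    ∃ c : avoidSet s t → Fin 2,
      {v : avoidSet s t | c v = 0}.ncard = 4 ∧
      {v : avoidSet s t | c v = 1}.ncard = 4 ∧
      (∀ i : Fin 2,
        ∀ K : ((Pminus s t).induce {v | c v = i}).ConnectedComponent, K.supp.ncard ≤ 2) ∧
      (∀ v : avoidSet s t, IsDeg2 s t v →
        (c v = 0 ↔ ((v : PetersenVert) = l ∨ (v : PetersenVert) = r))) ∧
      (∃ w : avoidSet s t, Petersen.Adj r (w : PetersenVert) ∧ c w = 0) ∧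
      (∀ w : avoidSet s t, Petersen.Adj l (w : PetersenVert) → c w ≠ 0) := by
  refine ⟨theColouring t l r s, ?_, ?_, ?_, ?_,
    core5 s t l r hst hsl hlt htr hrs, core6 s t l r hst hsl hlt htr hrs⟩
  · rw [Set.ncard_eq_toFinset_card', Set.toFinset_setOf]
    exact core1 s t l r hst hsl hlt htr hrs
  · rw [Set.ncard_eq_toFinset_card', Set.toFinset_setOf]
    exact core2 s t l r hst hsl hlt htr hrs
  · intro i K
    apply comp_card_le_two
    rintro ⟨v, hv⟩ ⟨w1, hw1⟩ h1' ⟨w2, hw2⟩ h2'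
    have a1 : (Pminus s t).Adj v w1 := h1'
    have a2 : (Pminus s t).Adj v w2 := h2'
    have e1 : theColouring t l r s w1 = theColouring t l r s v := by
      rw [Set.mem_setOf_eq] at hv hw1; rw [hv, hw1]
    have e2 : theColouring t l r s w2 = theColouring t l r s v := by
      rw [Set.mem_setOf_eq] at hv hw2; rw [hv, hw2]
    exact Subtype.ext (core3 s t l r hst hsl hlt htr hrs v w1 w2 a1 a2 e1 e2)
  · intro v hv
    apply core4 s t l r hst hsl hlt htr hrs
    have heq : ((Pminus s t).neighborSet v).toFinset =
        (Finset.univ.filter fun w => (Pminus s t).Adj v w) := by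
      ext w; simp [SimpleGraph.mem_neighborSet]
    rw [IsDeg2, Set.ncard_eq_toFinset_card', heq] at hv
    exact hv
end
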